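/- Schäffer-type Andô dilation: Let T₁ and T₂ be commuting contractions on a complex Hilbert space H and T = T₁T₂. Let F := H ⊕ H, let P be the orthogonal projection of F onto the first summand, and suppose U is a unitary on F satisfying U(D_{T₁}T₂h, D_{T₂}h) = (D_{T₁}h, D_{T₂}T₁h) for all h ∈ H. Set λh := (D_{T₁}T₂h, D_{T₂}h), E₁ := (I − P)U, E₂ := U*P, and let K := H ⊕ ℓ²(ℕ, F). Then there exist bounded operators V₁, V₂ on K given by V₁(h, f) = (T₁h, g) with g(0) = E₂*(λh) + E₁(f(0)) and g(n+1) = E₂*(f(n)) + E₁(f(n+1)), and V₂(h, f) = (T₂h, g′) with g′(0) = E₁*(λh) + E₂(f(0)) and g′(n+1) = E₁*(f(n)) + E₂(f(n+1)); moreover V₁ and V₂ are commuting isometries and, with the isometric embedding Π : H → K, Πh := (h, 0), they satisfy Π ∘ T₁* = V₁* ∘ Π and Π ∘ T₂* = V₂* ∘ Π. -/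

import Mathlib

open ContinuousLinearMap

/-- The Hilbert space direct sum `H ⊕ H`, realized as `WithLp 2 (H × H)`. -/
noncomputable abbrev HilbertProd (H : Type*) : Type _ := WithLp 2 (H × H)

/-- The element `(x, y)` of the Hilbert space direct sum `H ⊕ H`. -/
noncomputable abbrev pairL2 {H : Type*} (x y : H) : HilbertProd H :=
  (WithLp.equiv 2 (H × H)).symm (x, y)

/-- The Schäffer space `K = H ⊕ ℓ²(ℕ, H ⊕ H)`. -/
noncomputable abbrev SchafferSpace (H : Type*) [NormedAddCommGroup H] : Type _ :=
  WithLp 2 (H × lp (fun _ : ℕ => HilbertProd H) 2)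

/-- The element `(h, f)` of the Schäffer space `K = H ⊕ ℓ²(ℕ, H ⊕ H)`. -/
noncomputable abbrev schafferPair {H : Type*} [NormedAddCommGroup H] (h : H)
    (f : lp (fun _ : ℕ => HilbertProd H) 2) : SchafferSpace H :=
  (WithLp.equiv 2 (H × lp (fun _ : ℕ => HilbertProd H) 2)).symm (h, f)

/-- The two components of an element of the Schäffer space. -/
noncomputable abbrev schafferFst {H : Type*} [NormedAddCommGroup H] (x : SchafferSpace H) : H :=
  ((WithLp.equiv 2 (H × lp (fun _ : ℕ => HilbertProd H) 2)) x).1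

noncomputable abbrev schafferSnd {H : Type*} [NormedAddCommGroup H] (x : SchafferSpace H) :
    lp (fun _ : ℕ => HilbertProd H) 2 :=
  ((WithLp.equiv 2 (H × lp (fun _ : ℕ => HilbertProd H) 2)) x).2

noncomputable section Aux

variable {H : Type*} [NormedAddCommGroup H] [InnerProductSpace ℂ H] [CompleteSpace H]

local notation "F" => HilbertProd H
local notation "lp2" => lp (fun _ : ℕ => HilbertProd H) 2
local notation "⟪" x ", " y "⟫" => @inner ℂ _ _ x y

/-- cons sequence -/
def consSeq (a : F) (f : lp2) : ∀ _ : ℕ, F := fun n => Nat.casesOn n a fun k => f k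

lemma memℓp_consSeq (a : F) (f : lp2) : Memℓp (consSeq a f) 2 := by
  apply memℓp_gen
  have hf : Summable (fun n => ‖f n‖ ^ (ENNReal.toReal 2)) :=
    (lp.memℓp f).summable (by norm_num)
  exact (summable_nat_add_iff 1).1 hf

def lpCons (a : F) (f : lp2) : lp2 := ⟨consSeq a f, memℓp_consSeq a f⟩

@[simp] lemma lpCons_zero (a : F) (f : lp2) : lpCons a f 0 = a := rfl
@[simp] lemma lpCons_succ (a : F) (f : lp2) (n : ℕ) : lpCons a f (n + 1) = f n := rfl

lemma memℓp_map (C : F →L[ℂ] F) (f : lp2) : Memℓp (fun n => C (f n)) 2 := by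
  apply memℓp_gen
  have hf : Summable (fun n => ‖f n‖ ^ (ENNReal.toReal 2)) :=
    (lp.memℓp f).summable (by norm_num)
  have h2 : (ENNReal.toReal 2) = (2 : ℝ) := by norm_num
  rw [h2] at hf ⊢
  refine Summable.of_nonneg_of_le (fun n => Real.rpow_nonneg (norm_nonneg _) _)
    (fun n => ?_) (hf.mul_left (‖C‖ ^ (2 : ℝ)))
  rw [← Real.mul_rpow (norm_nonneg _) (norm_nonneg _)]
  exact Real.rpow_le_rpow (norm_nonneg _) (C.le_opNorm _) (by norm_num)

def lpMap (C : F →L[ℂ] F) (f : lp2) : lp2 := ⟨fun n => C (f n), memℓp_map C f⟩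

@[simp] lemma lpMap_apply (C : F →L[ℂ] F) (f : lp2) (n : ℕ) : lpMap C f n = C (f n) := rfl

lemma lpMap_add (C : F →L[ℂ] F) (f g : lp2) : lpMap C (f + g) = lpMap C f + lpMap C g := by
  ext n; simp

lemma lpMap_smul (C : F →L[ℂ] F) (c : ℂ) (f : lp2) : lpMap C (c • f) = c • lpMap C f := by
  ext n; simp

lemma lpCons_add (a b : F) (f g : lp2) :
    lpCons (a + b) (f + g) = lpCons a f + lpCons b g := by
  ext n; cases n <;> simp

lemma lpCons_smul (c : ℂ) (a : F) (f : lp2) :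
    lpCons (c • a) (c • f) = c • lpCons a f := by
  ext n; cases n <;> simp

lemma lpMap_cons (C : F →L[ℂ] F) (a : F) (f : lp2) :
    lpMap C (lpCons a f) = lpCons (C a) (lpMap C f) := by
  ext n; cases n <;> rfl

lemma lpMap_lpMap (C D : F →L[ℂ] F) (f : lp2) : lpMap C (lpMap D f) = lpMap (C.comp D) f := rfl

lemma lpMap_eq_zero {C : F →L[ℂ] F} (hC : ∀ x, C x = 0) (f : lp2) : lpMap C f = 0 := by
  ext n; simp [hC]

lemma lpMap_id {C : F →L[ℂ] F} (hC : ∀ x, C x = x) (f : lp2) : lpMap C f = f := by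
  ext n; simp [hC]

lemma lpMap_add_lpMap {C D : F →L[ℂ] F} (hCD : ∀ x, C x + D x = x) (f : lp2) :
    lpMap C f + lpMap D f = f := by
  ext n; simp [hCD]

lemma inner_lpCons (a b : F) (f g : lp2) :
    ⟪lpCons a f, lpCons b g⟫ = ⟪a, b⟫ + ⟪f, g⟫ := by
  rw [lp.inner_eq_tsum, lp.inner_eq_tsum,
    Summable.tsum_eq_zero_add (lp.summable_inner (𝕜 := ℂ) (lpCons a f) (lpCons b g))]
  simp

lemma inner_lpMap_orth {C D : F →L[ℂ] F} (h : ∀ u v, ⟪C u, D v⟫ = 0) (f g : lp2) :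
    ⟪lpMap C f, lpMap D g⟫ = 0 := by
  rw [lp.inner_eq_tsum]
  simp [h]

lemma inner_lpMap_pyth {C D : F →L[ℂ] F} (h : ∀ u v, ⟪C u, C v⟫ + ⟪D u, D v⟫ = ⟪u, v⟫)
    (f g : lp2) : ⟪lpMap C f, lpMap C g⟫ + ⟪lpMap D f, lpMap D g⟫ = ⟪f, g⟫ := by
  rw [lp.inner_eq_tsum, lp.inner_eq_tsum, lp.inner_eq_tsum,
    ← Summable.tsum_add (lp.summable_inner (𝕜 := ℂ) (lpMap C f) (lpMap C g))
      (lp.summable_inner (𝕜 := ℂ) (lpMap D f) (lpMap D g))]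
  exact tsum_congr fun n => h (f n) (g n)


lemma schaffer_ext {x y : SchafferSpace H} (h1 : schafferFst x = schafferFst y)
    (h2 : schafferSnd x = schafferSnd y) : x = y := (WithLp.equiv _ _).injective (Prod.ext h1 h2)

@[simp] lemma schafferFst_pair (h : H) (f : lp2) : schafferFst (schafferPair h f) = h := rfl
@[simp] lemma schafferSnd_pair (h : H) (f : lp2) : schafferSnd (schafferPair h f) = f := rfl
@[simp] lemma schafferFst_add (x y : SchafferSpace H) :
    schafferFst (x + y) = schafferFst x + schafferFst y := rfl
@[simp] lemma schafferSnd_add (x y : SchafferSpace H) :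
    schafferSnd (x + y) = schafferSnd x + schafferSnd y := rfl
@[simp] lemma schafferFst_smul (c : ℂ) (x : SchafferSpace H) :
    schafferFst (c • x) = c • schafferFst x := rfl
@[simp] lemma schafferSnd_smul (c : ℂ) (x : SchafferSpace H) :
    schafferSnd (c • x) = c • schafferSnd x := rfl

set_option linter.unusedSectionVars false

/-- The generic Schäffer-type operator. -/
def Vgen (T : H →L[ℂ] H) (Λ : H →L[ℂ] F) (A E : F →L[ℂ] F) :
    SchafferSpace H →ₗ[ℂ] SchafferSpace H where
  toFun x := schafferPair (T (schafferFst x))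
    (lpMap A (lpCons (Λ (schafferFst x)) (schafferSnd x)) + lpMap E (schafferSnd x))
  map_add' x y := by
    apply schaffer_ext
    · simp [map_add]
    · simp only [schafferFst_pair, schafferSnd_pair, schafferFst_add, schafferSnd_add, map_add,
        lpCons_add, lpMap_add]
      abel
  map_smul' c x := by
    apply schaffer_ext
    · simp [map_smul]
    · simp only [schafferFst_pair, schafferSnd_pair, schafferFst_smul, schafferSnd_smul,
        map_smul, lpCons_smul, lpMap_smul, RingHom.id_apply, smul_add]

lemma Vgen_apply (T : H →L[ℂ] H) (Λ : H →L[ℂ] F) (A E : F →L[ℂ] F) (x : SchafferSpace H) :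
    Vgen T Λ A E x = schafferPair (T (schafferFst x))
      (lpMap A (lpCons (Λ (schafferFst x)) (schafferSnd x)) + lpMap E (schafferSnd x)) := rfl

lemma Vgen_apply' (T : H →L[ℂ] H) (Λ : H →L[ℂ] F) (A E : F →L[ℂ] F) (h : H) (f : lp2) :
    Vgen T Λ A E (schafferPair h f) = schafferPair (T h)
      (lpMap A (lpCons (Λ h) f) + lpMap E f) := rfl

lemma inner_schafferPair (a b : H) (u v : lp2) :
    ⟪(schafferPair a u : SchafferSpace H), schafferPair b v⟫ = ⟪a, b⟫ + ⟪u, v⟫ := rfl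

lemma Vgen_inner (T : H →L[ℂ] H) (Λ : H →L[ℂ] F) (A E : F →L[ℂ] F)
    (hOrth : ∀ u v : F, ⟪A u, E v⟫ = 0)
    (hPy : ∀ u v : F, ⟪A u, A v⟫ + ⟪E u, E v⟫ = ⟪u, v⟫)
    (hT : ∀ h k : H, ⟪T h, T k⟫ + ⟪A (Λ h), A (Λ k)⟫ = ⟪h, k⟫)
    (x y : SchafferSpace H) : ⟪Vgen T Λ A E x, Vgen T Λ A E y⟫ = ⟪x, y⟫ := by
  have hOrth' : ∀ u v : F, ⟪E u, A v⟫ = 0 := fun u v => by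
    rw [← inner_conj_symm, hOrth, map_zero]
  have key : ∀ (h : H) (f : lp2) (k : H) (p : lp2),
      ⟪Vgen T Λ A E (schafferPair h f), Vgen T Λ A E (schafferPair k p)⟫
        = ⟪(schafferPair h f : SchafferSpace H), schafferPair k p⟫ := by
    intro h f k p
    rw [Vgen_apply', Vgen_apply', inner_schafferPair, inner_schafferPair, inner_add_left,
      inner_add_right, inner_add_right, inner_lpMap_orth hOrth, inner_lpMap_orth hOrth',
      lpMap_cons, lpMap_cons, inner_lpCons]
    linear_combination (hT h k) + (inner_lpMap_pyth hPy f p)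
  exact key (schafferFst x) (schafferSnd x) (schafferFst y) (schafferSnd y)


lemma pairL2_add (a b c d : H) : (pairL2 a b : F) + pairL2 c d = pairL2 (a + c) (b + d) := rfl
lemma pairL2_sub (a b c d : H) : (pairL2 a b : F) - pairL2 c d = pairL2 (a - c) (b - d) := rfl
lemma pairL2_zero : (pairL2 0 0 : F) = 0 := rfl
lemma inner_pairL2 (a b c d : H) : ⟪(pairL2 a b : F), pairL2 c d⟫ = ⟪a, c⟫ + ⟪b, d⟫ := rfl

lemma Vgen_comm (T₁ T₂ : H →L[ℂ] H) (Λ : H →L[ℂ] F) (A₁ E₁ A₂ E₂ : F →L[ℂ] F)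
    (hTT : ∀ h : H, T₁ (T₂ h) = T₂ (T₁ h))
    (c1 : ∀ x : F, A₁ (A₂ x) = 0) (c1' : ∀ x : F, A₂ (A₁ x) = 0)
    (c2 : ∀ x : F, E₁ (E₂ x) = 0) (c2' : ∀ x : F, E₂ (E₁ x) = 0)
    (c5 : ∀ x : F, A₁ (E₂ x) + E₁ (A₂ x) = x) (c5' : ∀ x : F, A₂ (E₁ x) + E₂ (A₁ x) = x)
    (c6 : ∀ h : H, A₁ (Λ (T₂ h)) + E₁ (A₂ (Λ h)) = A₂ (Λ (T₁ h)) + E₂ (A₁ (Λ h)))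
    (x : SchafferSpace H) :
    Vgen T₁ Λ A₁ E₁ (Vgen T₂ Λ A₂ E₂ x) = Vgen T₂ Λ A₂ E₂ (Vgen T₁ Λ A₁ E₁ x) := by
  have key : ∀ (h : H) (f : lp2),
      Vgen T₁ Λ A₁ E₁ (Vgen T₂ Λ A₂ E₂ (schafferPair h f))
        = Vgen T₂ Λ A₂ E₂ (Vgen T₁ Λ A₁ E₁ (schafferPair h f)) := by
    intro h f
    rw [Vgen_apply', Vgen_apply', Vgen_apply', Vgen_apply']
    apply schaffer_ext
    · simpa using hTT h
    · simp only [schafferSnd_pair, schafferFst_pair]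
      ext n
      rcases n with _ | n
      · simp only [lp.coeFn_add, Pi.add_apply, lpMap_apply, lpCons_zero, map_add, c2, c2',
          add_zero]
        exact c6 h
      · simp only [lp.coeFn_add, Pi.add_apply, lpMap_apply, lpCons_succ, map_add, c1, c1',
          c2, c2', add_zero, zero_add]
        rw [c5, c5']
  exact key (schafferFst x) (schafferSnd x)

end Aux


set_option maxHeartbeats 2000000
open scoped InnerProductSpace
open ContinuousLinearMap

/-- **Schäffer-type Andô dilation.**  With the data `P, U, λ, E₁, E₂` of an Andô tuple for
commuting contractions `(T₁, T₂)`, there are commuting isometries `V₁, V₂` on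
`K = H ⊕ ℓ²(ℕ, H ⊕ H)` given by the explicit Schäffer-type formulas, and with the isometric
embedding `Π h = (h, 0)` they dilate `(T₁, T₂)`: `Π T₁* = V₁* Π` and `Π T₂* = V₂* Π`. -/
theorem schaffer_ando_dilation {H : Type*} [NormedAddCommGroup H] [InnerProductSpace ℂ H]
    [CompleteSpace H] (T₁ T₂ D₁ D₂ D : H →L[ℂ] H)
    (hT₁ : ‖T₁‖ ≤ 1) (hT₂ : ‖T₂‖ ≤ 1) (hcomm : T₁ * T₂ = T₂ * T₁)
    (hD₁pos : D₁.IsPositive) (hD₁sq : D₁ * D₁ = 1 - adjoint T₁ * T₁)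
    (hD₂pos : D₂.IsPositive) (hD₂sq : D₂ * D₂ = 1 - adjoint T₂ * T₂)
    (hDpos : D.IsPositive) (hDsq : D * D = 1 - adjoint (T₁ * T₂) * (T₁ * T₂))
    (P U : HilbertProd H →L[ℂ] HilbertProd H)
    (hP : ∀ x y : H, P (pairL2 x y) = pairL2 x 0)
    (hUiso : adjoint U * U = 1) (hUco : U * adjoint U = 1)
    (hU : ∀ h : H, U (pairL2 (D₁ (T₂ h)) (D₂ h)) = pairL2 (D₁ h) (D₂ (T₁ h)))
    (lam : H → HilbertProd H) (hlam : ∀ h : H, lam h = pairL2 (D₁ (T₂ h)) (D₂ h))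
    (E₁ E₂ : HilbertProd H →L[ℂ] HilbertProd H)
    (hE₁ : E₁ = (1 - P) * U) (hE₂ : E₂ = adjoint U * P) :
    ∃ V₁ V₂ : SchafferSpace H →L[ℂ] SchafferSpace H,
      (∀ (h : H) (f : lp (fun _ : ℕ => HilbertProd H) 2),
        schafferFst (V₁ (schafferPair h f)) = T₁ h ∧
        schafferSnd (V₁ (schafferPair h f)) 0 = adjoint E₂ (lam h) + E₁ (f 0) ∧
        ∀ n : ℕ, schafferSnd (V₁ (schafferPair h f)) (n + 1)
          = adjoint E₂ (f n) + E₁ (f (n + 1))) ∧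
      (∀ (h : H) (f : lp (fun _ : ℕ => HilbertProd H) 2),
        schafferFst (V₂ (schafferPair h f)) = T₂ h ∧
        schafferSnd (V₂ (schafferPair h f)) 0 = adjoint E₁ (lam h) + E₂ (f 0) ∧
        ∀ n : ℕ, schafferSnd (V₂ (schafferPair h f)) (n + 1)
          = adjoint E₁ (f n) + E₂ (f (n + 1))) ∧
      adjoint V₁ * V₁ = 1 ∧ adjoint V₂ * V₂ = 1 ∧ V₁ * V₂ = V₂ * V₁ ∧
      ∃ Pi : H →ₗᵢ[ℂ] SchafferSpace H,
        (∀ h : H, Pi h = schafferPair h 0) ∧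
        (∀ h : H, Pi (adjoint T₁ h) = adjoint V₁ (Pi h)) ∧
        (∀ h : H, Pi (adjoint T₂ h) = adjoint V₂ (Pi h)) := by
  classical
  -- the lambda map as a continuous linear map
  set Λ : H →L[ℂ] HilbertProd H :=
    ((WithLp.prodContinuousLinearEquiv 2 ℂ H H).symm.toContinuousLinearMap).comp
      ((D₁.comp T₂).prod D₂) with hΛdef
  have hΛ : ∀ h : H, Λ h = pairL2 (D₁ (T₂ h)) (D₂ h) := fun h => rfl
  set A₁ : HilbertProd H →L[ℂ] HilbertProd H := adjoint E₂ with hA₁def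
  set A₂ : HilbertProd H →L[ℂ] HilbertProd H := adjoint E₁ with hA₂def
  -- pointwise descriptions
  have hPz : ∀ z : HilbertProd H, P z = pairL2 z.ofLp.1 0 := fun z => hP z.ofLp.1 z.ofLp.2
  have hPidem : ∀ z : HilbertProd H, P (P z) = P z := by
    intro z
    rw [hPz z]
    exact hPz (pairL2 z.ofLp.1 0)
  have hPadj : adjoint P = P := by
    refine ((eq_adjoint_iff P P).2 fun x y => ?_).symm
    calc ⟪P x, y⟫_ℂ = ⟪x.ofLp.1, y.ofLp.1⟫_ℂ + ⟪(0 : H), y.ofLp.2⟫_ℂ := by rw [hPz x]; rfl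
      _ = ⟪x.ofLp.1, y.ofLp.1⟫_ℂ + ⟪x.ofLp.2, (0 : H)⟫_ℂ := by simp
      _ = ⟪x, P y⟫_ℂ := by rw [hPz y]; rfl
  have hUUad : ∀ x : HilbertProd H, U (adjoint U x) = x := by
    intro x
    have := DFunLike.congr_fun hUco x
    simpa [ContinuousLinearMap.mul_apply] using this
  have hadUU : ∀ x : HilbertProd H, adjoint U (U x) = x := by
    intro x
    have := DFunLike.congr_fun hUiso x
    simpa [ContinuousLinearMap.mul_apply] using this
  have hE₁x : ∀ x : HilbertProd H, E₁ x = U x - P (U x) := by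
    intro x
    rw [hE₁]
    simp [ContinuousLinearMap.mul_apply, ContinuousLinearMap.sub_apply]
  have hE₂x : ∀ x : HilbertProd H, E₂ x = adjoint U (P x) := by
    intro x
    rw [hE₂]
    simp [ContinuousLinearMap.mul_apply]
  have hA₁x : ∀ x : HilbertProd H, A₁ x = P (U x) := by
    intro x
    rw [hA₁def, hE₂]
    have : adjoint (adjoint U * P) = adjoint P * adjoint (adjoint U) := adjoint_comp (adjoint U) P
    rw [this, hPadj, adjoint_adjoint]
    simp [ContinuousLinearMap.mul_apply]
  have hA₂x : ∀ x : HilbertProd H, A₂ x = adjoint U (x - P x) := by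
    intro x
    rw [hA₂def, hE₁]
    have h1 : adjoint ((1 - P) * U) = adjoint U * adjoint (1 - P) := adjoint_comp (1 - P) U
    have h2 : adjoint (1 - P) = 1 - P := by
      rw [← star_eq_adjoint, star_sub, star_one, star_eq_adjoint, hPadj]
    rw [h1, h2]
    simp [ContinuousLinearMap.mul_apply, ContinuousLinearMap.sub_apply]
  -- algebraic identities
  have c1 : ∀ x : HilbertProd H, A₁ (A₂ x) = 0 := by
    intro x
    rw [hA₂x, hA₁x, hUUad, map_sub, hPidem, sub_self]
  have c1' : ∀ x : HilbertProd H, A₂ (A₁ x) = 0 := by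
    intro x
    rw [hA₁x, hA₂x, hPidem, sub_self, map_zero]
  have c2 : ∀ x : HilbertProd H, E₁ (E₂ x) = 0 := by
    intro x
    rw [hE₂x, hE₁x, hUUad, hPidem, sub_self]
  have c2' : ∀ x : HilbertProd H, E₂ (E₁ x) = 0 := by
    intro x
    rw [hE₁x, hE₂x, map_sub, hPidem, sub_self, map_zero]
  have c5 : ∀ x : HilbertProd H, A₁ (E₂ x) + E₁ (A₂ x) = x := by
    intro x
    rw [hE₂x, hA₁x, hUUad, hA₂x, hE₁x, hUUad, hPidem, map_sub, hPidem, sub_self, sub_zero]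
    abel
  have c5' : ∀ x : HilbertProd H, A₂ (E₁ x) + E₂ (A₁ x) = x := by
    intro x
    rw [hE₁x, hA₂x, hA₁x, hE₂x, hPidem, ← map_add]
    rw [map_sub, hPidem, sub_self, sub_zero, sub_add_cancel, hadUU]
  -- action on lambda vectors
  have hUΛ : ∀ h : H, U (Λ h) = pairL2 (D₁ h) (D₂ (T₁ h)) := fun h => hU h
  have hPΛU : ∀ h : H, P (U (Λ h)) = pairL2 (D₁ h) 0 := by
    intro h
    rw [hUΛ h]
    exact hP _ _
  have hA₁Λ : ∀ h : H, A₁ (Λ h) = pairL2 (D₁ h) 0 := by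
    intro h
    rw [hA₁x, hPΛU]
  have hsubPΛ : ∀ h : H, Λ h - P (Λ h) = pairL2 0 (D₂ h) := by
    intro h
    rw [hΛ h, hP]
    rw [pairL2_sub]
    simp
  have hA₂Λ : ∀ h : H, A₂ (Λ h) = adjoint U (pairL2 0 (D₂ h)) := by
    intro h
    rw [hA₂x, hsubPΛ]
  -- the key c6 identity
  have c6 : ∀ h : H, A₁ (Λ (T₂ h)) + E₁ (A₂ (Λ h)) = A₂ (Λ (T₁ h)) + E₂ (A₁ (Λ h)) := by
    intro h
    have l1 : A₁ (Λ (T₂ h)) = pairL2 (D₁ (T₂ h)) 0 := hA₁Λ (T₂ h)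
    have l2 : E₁ (A₂ (Λ h)) = pairL2 0 (D₂ h) := by
      rw [hA₂Λ, hE₁x, hUUad]
      rw [show P (pairL2 (0 : H) (D₂ h)) = pairL2 0 0 from hP _ _, pairL2_sub]
      simp
    have r1 : A₂ (Λ (T₁ h)) = adjoint U (pairL2 0 (D₂ (T₁ h))) := hA₂Λ (T₁ h)
    have r2 : E₂ (A₁ (Λ h)) = adjoint U (pairL2 (D₁ h) 0) := by
      rw [hA₁Λ, hE₂x, show P (pairL2 (D₁ h) (0 : H)) = pairL2 (D₁ h) 0 from hP _ _]
    rw [l1, l2, r1, r2, pairL2_add, ← map_add, pairL2_add]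
    rw [add_zero, zero_add, add_zero, zero_add]
    calc pairL2 (D₁ (T₂ h)) (D₂ h) = Λ h := (hΛ h).symm
      _ = adjoint U (U (Λ h)) := (hadUU _).symm
      _ = adjoint U (pairL2 (D₁ h) (D₂ (T₁ h))) := by rw [hUΛ]
  -- inner product hypotheses for V₁
  have hOrth₁ : ∀ u v : HilbertProd H, ⟪A₁ u, E₁ v⟫_ℂ = 0 := by
    intro u v
    rw [hA₁def, adjoint_inner_left, c2', inner_zero_right]
  have hPy₁ : ∀ u v : HilbertProd H, ⟪A₁ u, A₁ v⟫_ℂ + ⟪E₁ u, E₁ v⟫_ℂ = ⟪u, v⟫_ℂ := by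
    intro u v
    rw [hA₁def, adjoint_inner_left]
    rw [show ⟪E₁ u, E₁ v⟫_ℂ = ⟪u, A₂ (E₁ v)⟫_ℂ from (adjoint_inner_right E₁ u (E₁ v)).symm]
    rw [← inner_add_right]
    rw [show E₂ (adjoint E₂ v) + A₂ (E₁ v) = v from by
      have := c5' v; rw [add_comm] at this; exact this]
  have hTin₁ : ∀ h k : H, ⟪T₁ h, T₁ k⟫_ℂ + ⟪A₁ (Λ h), A₁ (Λ k)⟫_ℂ = ⟪h, k⟫_ℂ := by
    intro h k
    rw [hA₁Λ, hA₁Λ, inner_pairL2]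
    have hD : ⟪D₁ h, D₁ k⟫_ℂ = ⟪h, k⟫_ℂ - ⟪T₁ h, T₁ k⟫_ℂ := by
      have hsa : adjoint D₁ = D₁ := isSelfAdjoint_iff'.1 hD₁pos.isSelfAdjoint
      calc ⟪D₁ h, D₁ k⟫_ℂ = ⟪adjoint D₁ h, D₁ k⟫_ℂ := by rw [hsa]
        _ = ⟪h, D₁ (D₁ k)⟫_ℂ := adjoint_inner_left D₁ (D₁ k) h
        _ = ⟪h, k - adjoint T₁ (T₁ k)⟫_ℂ := by
            have := DFunLike.congr_fun hD₁sq k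
            simp only [ContinuousLinearMap.mul_apply, ContinuousLinearMap.sub_apply,
              ContinuousLinearMap.one_apply] at this
            rw [this]
        _ = ⟪h, k⟫_ℂ - ⟪T₁ h, T₁ k⟫_ℂ := by
            rw [inner_sub_right, adjoint_inner_right]
    rw [hD]
    simp
  -- inner product hypotheses for V₂
  have hOrth₂ : ∀ u v : HilbertProd H, ⟪A₂ u, E₂ v⟫_ℂ = 0 := by
    intro u v
    rw [hA₂def, adjoint_inner_left, c2, inner_zero_right]
  have hPy₂ : ∀ u v : HilbertProd H, ⟪A₂ u, A₂ v⟫_ℂ + ⟪E₂ u, E₂ v⟫_ℂ = ⟪u, v⟫_ℂ := by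
    intro u v
    rw [hA₂def, adjoint_inner_left]
    rw [show ⟪E₂ u, E₂ v⟫_ℂ = ⟪u, A₁ (E₂ v)⟫_ℂ from (adjoint_inner_right E₂ u (E₂ v)).symm]
    rw [← inner_add_right]
    rw [show E₁ (adjoint E₁ v) + A₁ (E₂ v) = v from by
      have := c5 v; rw [add_comm] at this; exact this]
  have hTin₂ : ∀ h k : H, ⟪T₂ h, T₂ k⟫_ℂ + ⟪A₂ (Λ h), A₂ (Λ k)⟫_ℂ = ⟪h, k⟫_ℂ := by
    intro h k
    rw [hA₂Λ, hA₂Λ]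
    have hUn : ⟪adjoint U (pairL2 (0:H) (D₂ h)), adjoint U (pairL2 (0:H) (D₂ k))⟫_ℂ
        = ⟪(pairL2 (0:H) (D₂ h) : HilbertProd H), pairL2 (0:H) (D₂ k)⟫_ℂ := by
      rw [adjoint_inner_left, hUUad]
    rw [hUn, inner_pairL2]
    have hD : ⟪D₂ h, D₂ k⟫_ℂ = ⟪h, k⟫_ℂ - ⟪T₂ h, T₂ k⟫_ℂ := by
      have hsa : adjoint D₂ = D₂ := isSelfAdjoint_iff'.1 hD₂pos.isSelfAdjoint
      calc ⟪D₂ h, D₂ k⟫_ℂ = ⟪adjoint D₂ h, D₂ k⟫_ℂ := by rw [hsa]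
        _ = ⟪h, D₂ (D₂ k)⟫_ℂ := adjoint_inner_left D₂ (D₂ k) h
        _ = ⟪h, k - adjoint T₂ (T₂ k)⟫_ℂ := by
            have := DFunLike.congr_fun hD₂sq k
            simp only [ContinuousLinearMap.mul_apply, ContinuousLinearMap.sub_apply,
              ContinuousLinearMap.one_apply] at this
            rw [this]
        _ = ⟪h, k⟫_ℂ - ⟪T₂ h, T₂ k⟫_ℂ := by
            rw [inner_sub_right, adjoint_inner_right]
    rw [hD]
    simp
  -- define V₁ and V₂
  have hInn₁ := Vgen_inner T₁ Λ A₁ E₁ hOrth₁ hPy₁ hTin₁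
  have hInn₂ := Vgen_inner T₂ Λ A₂ E₂ hOrth₂ hPy₂ hTin₂
  have hNorm₁ : ∀ x : SchafferSpace H, ‖Vgen T₁ Λ A₁ E₁ x‖ ≤ 1 * ‖x‖ := by
    intro x
    rw [one_mul, @norm_eq_sqrt_re_inner ℂ, @norm_eq_sqrt_re_inner ℂ (SchafferSpace H) _ _ _ x, hInn₁]
  have hNorm₂ : ∀ x : SchafferSpace H, ‖Vgen T₂ Λ A₂ E₂ x‖ ≤ 1 * ‖x‖ := by
    intro x
    rw [one_mul, @norm_eq_sqrt_re_inner ℂ, @norm_eq_sqrt_re_inner ℂ (SchafferSpace H) _ _ _ x, hInn₂]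
  set V₁ : SchafferSpace H →L[ℂ] SchafferSpace H :=
    LinearMap.mkContinuous (Vgen T₁ Λ A₁ E₁) 1 hNorm₁ with hV₁def
  set V₂ : SchafferSpace H →L[ℂ] SchafferSpace H :=
    LinearMap.mkContinuous (Vgen T₂ Λ A₂ E₂) 1 hNorm₂ with hV₂def
  have hV₁app : ∀ x : SchafferSpace H, V₁ x = Vgen T₁ Λ A₁ E₁ x := fun x => rfl
  have hV₂app : ∀ x : SchafferSpace H, V₂ x = Vgen T₂ Λ A₂ E₂ x := fun x => rfl
  refine ⟨V₁, V₂, ?_, ?_, ?_, ?_, ?_, ?_⟩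
  · -- formulas for V₁
    intro h f
    refine ⟨rfl, ?_, fun n => ?_⟩
    · show (lpMap A₁ (lpCons (Λ h) f) + lpMap E₁ f) 0 = adjoint E₂ (lam h) + E₁ (f 0)
      simp only [lp.coeFn_add, Pi.add_apply, lpMap_apply, lpCons_zero]
      rw [hlam, ← hΛ h]
    · show (lpMap A₁ (lpCons (Λ h) f) + lpMap E₁ f) (n + 1) = adjoint E₂ (f n) + E₁ (f (n + 1))
      simp only [lp.coeFn_add, Pi.add_apply, lpMap_apply, lpCons_succ]
      rfl
  · -- formulas for V₂
    intro h f
    refine ⟨rfl, ?_, fun n => ?_⟩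
    · show (lpMap A₂ (lpCons (Λ h) f) + lpMap E₂ f) 0 = adjoint E₁ (lam h) + E₂ (f 0)
      simp only [lp.coeFn_add, Pi.add_apply, lpMap_apply, lpCons_zero]
      rw [hlam, ← hΛ h]
    · show (lpMap A₂ (lpCons (Λ h) f) + lpMap E₂ f) (n + 1) = adjoint E₁ (f n) + E₂ (f (n + 1))
      simp only [lp.coeFn_add, Pi.add_apply, lpMap_apply, lpCons_succ]
      rfl
  · -- V₁ is an isometry
    ext x
    refine ext_inner_right ℂ fun y => ?_
    rw [ContinuousLinearMap.mul_apply, adjoint_inner_left, ContinuousLinearMap.one_apply]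
    rw [hV₁app, hV₁app]
    exact hInn₁ x y
  · -- V₂ is an isometry
    ext x
    refine ext_inner_right ℂ fun y => ?_
    rw [ContinuousLinearMap.mul_apply, adjoint_inner_left, ContinuousLinearMap.one_apply]
    rw [hV₂app, hV₂app]
    exact hInn₂ x y
  · -- commutation
    ext x
    rw [ContinuousLinearMap.mul_apply, ContinuousLinearMap.mul_apply, hV₁app, hV₂app, hV₁app,
      hV₂app]
    exact Vgen_comm T₁ T₂ Λ A₁ E₁ A₂ E₂
      (fun h => by
        have := DFunLike.congr_fun hcomm h
        simpa [ContinuousLinearMap.mul_apply] using this)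
      c1 c1' c2 c2' c5 c5' c6 x
  · -- the isometric embedding and the dilation identities
    refine ⟨⟨⟨⟨fun h => schafferPair h 0, ?_⟩, ?_⟩, ?_⟩, fun h => rfl, ?_, ?_⟩
    · intro a b
      apply schaffer_ext <;> simp
    · intro c a
      apply schaffer_ext <;> simp
    · intro h
      exact WithLp.norm_toLp_fst 2 H (lp (fun _ : ℕ => HilbertProd H) 2) h
    · -- Π T₁* = V₁* Π
      intro h
      refine ext_inner_right ℂ fun z => ?_
      have hz : z = schafferPair (schafferFst z) (schafferSnd z) := rfl
      rw [adjoint_inner_left]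
      calc ⟪(schafferPair (adjoint T₁ h) 0 : SchafferSpace H), z⟫_ℂ
          = ⟪adjoint T₁ h, schafferFst z⟫_ℂ + ⟪(0 : lp (fun _ : ℕ => HilbertProd H) 2),
              schafferSnd z⟫_ℂ := by rw [hz]; exact inner_schafferPair _ _ _ _
        _ = ⟪h, T₁ (schafferFst z)⟫_ℂ := by rw [adjoint_inner_left]; simp
        _ = ⟪h, T₁ (schafferFst z)⟫_ℂ + ⟪(0 : lp (fun _ : ℕ => HilbertProd H) 2),
              lpMap A₁ (lpCons (Λ (schafferFst z)) (schafferSnd z))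
                + lpMap E₁ (schafferSnd z)⟫_ℂ := by simp
        _ = ⟪(schafferPair h 0 : SchafferSpace H), V₁ z⟫_ℂ := by
            rw [hV₁app, Vgen_apply]
            exact (inner_schafferPair _ _ _ _).symm
    · -- Π T₂* = V₂* Π
      intro h
      refine ext_inner_right ℂ fun z => ?_
      have hz : z = schafferPair (schafferFst z) (schafferSnd z) := rfl
      rw [adjoint_inner_left]
      calc ⟪(schafferPair (adjoint T₂ h) 0 : SchafferSpace H), z⟫_ℂ
          = ⟪adjoint T₂ h, schafferFst z⟫_ℂ + ⟪(0 : lp (fun _ : ℕ => HilbertProd H) 2),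
              schafferSnd z⟫_ℂ := by rw [hz]; exact inner_schafferPair _ _ _ _
        _ = ⟪h, T₂ (schafferFst z)⟫_ℂ := by rw [adjoint_inner_left]; simp
        _ = ⟪h, T₂ (schafferFst z)⟫_ℂ + ⟪(0 : lp (fun _ : ℕ => HilbertProd H) 2),
              lpMap A₂ (lpCons (Λ (schafferFst z)) (schafferSnd z))
                + lpMap E₂ (schafferSnd z)⟫_ℂ := by simp
        _ = ⟪(schafferPair h 0 : SchafferSpace H), V₂ z⟫_ℂ := by
            rw [hV₂app, Vgen_apply]
            exact (inner_schafferPair _ _ _ _).symm
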